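/- Let P₀ and P₁ be probability distributions on a finite set Σ with the same support, and suppose there exist ε, δ with 0 < ε < δ such that: (i) ∑_{m} |P₁(m) - P₀(m)| ≤ ε, and (ii) for every m with P₁(m) ≠ P₀(m), both P₀(m) ≥ δ and P₁(m) ≥ δ. Then the Kullback–Leibler divergence satisfies KL(P₀, P₁) ≤ (1/ln 2) · (1/2 + δ²ε/(3(δ-ε)³)) · ε²/δ, where KL is computed with base-2 logarithms. -/

import Mathlib

private lemma hd_pos (x : ℝ) (hx : -1 < x) :
    HasDerivAt (fun y : ℝ => Real.log (1 + y) - y + y ^ 2 / 2)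
      (1 / (1 + x) - 1 + x) x := by
  have h1 : HasDerivAt (fun y : ℝ => 1 + y) 1 x := (hasDerivAt_id x).const_add 1
  have h2 : HasDerivAt (fun y : ℝ => Real.log (1 + y)) (1 / (1 + x)) x := h1.log (by linarith)
  have h3 : HasDerivAt (fun y : ℝ => y ^ 2 / 2) x x := by
    have := (hasDerivAt_pow 2 x).div_const 2
    simpa using this
  exact (h2.sub (hasDerivAt_id x)).add h3

private lemma log_one_add_ge (t : ℝ) (ht : 0 ≤ t) :
    t - t ^ 2 / 2 ≤ Real.log (1 + t) := by
  set f : ℝ → ℝ := fun y => Real.log (1 + y) - y + y ^ 2 / 2 with hf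
  have hmono : MonotoneOn f (Set.Ici (0 : ℝ)) := by
    apply monotoneOn_of_deriv_nonneg (convex_Ici 0)
    · apply ContinuousOn.add (ContinuousOn.sub _ (continuousOn_id))
        ((continuous_pow 2).continuousOn.div_const 2)
      apply ContinuousOn.log (by fun_prop)
      intro x hx
      simp only [Set.mem_Ici] at hx; linarith
    · intro x hx
      rw [interior_Ici] at hx
      exact (hd_pos x (by simp only [Set.mem_Ioi] at hx; linarith)).differentiableAt.differentiableWithinAt
    · intro x hx
      rw [interior_Ici] at hx
      simp only [Set.mem_Ioi] at hx
      rw [(hd_pos x (by linarith)).deriv]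
      have h1x : (0:ℝ) < 1 + x := by linarith
      have : 1 / (1 + x) - 1 + x = x ^ 2 / (1 + x) := by field_simp; ring
      rw [this]; positivity
  have h0 : f 0 ≤ f t := hmono (by simp) (by simpa using ht) ht
  simp only [hf] at h0
  norm_num at h0
  linarith

private lemma hd_neg (x : ℝ) (hx0 : 0 < x) (hx1 : x < 1) :
    HasDerivAt (fun y : ℝ => Real.log (1 - y) + y + y ^ 2 / 2 + y ^ 3 / (3 * (1 - y)))
      (-1 / (1 - x) + 1 + x + (3 * x ^ 2 * (3 * (1 - x)) - x ^ 3 * (-3)) / (3 * (1 - x)) ^ 2) x := by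
  have hne : (1:ℝ) - x ≠ 0 := by linarith
  have h1 : HasDerivAt (fun y : ℝ => 1 - y) (-1) x := by
    simpa using (hasDerivAt_id x).const_sub 1
  have h2 : HasDerivAt (fun y : ℝ => Real.log (1 - y)) (-1 / (1 - x)) x := h1.log hne
  have h3 : HasDerivAt (fun y : ℝ => y ^ 2 / 2) x x := by
    simpa using (hasDerivAt_pow 2 x).div_const 2
  have h4 : HasDerivAt (fun y : ℝ => y ^ 3) (3 * x ^ 2) x := by
    simpa using hasDerivAt_pow 3 x
  have h5 : HasDerivAt (fun y : ℝ => 3 * (1 - y)) (-3) x := by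
    simpa using h1.const_mul 3
  have h6 : HasDerivAt (fun y : ℝ => y ^ 3 / (3 * (1 - y)))
      ((3 * x ^ 2 * (3 * (1 - x)) - x ^ 3 * (-3)) / (3 * (1 - x)) ^ 2) x :=
    h4.div h5 (by simpa using hne)
  exact ((h2.add (hasDerivAt_id x)).add h3).add h6

private lemma log_one_sub_ge (s : ℝ) (hs0 : 0 ≤ s) (hs1 : s < 1) :
    -Real.log (1 - s) ≤ s + s ^ 2 / 2 + s ^ 3 / (3 * (1 - s)) := by
  set f : ℝ → ℝ := fun y => Real.log (1 - y) + y + y ^ 2 / 2 + y ^ 3 / (3 * (1 - y)) with hf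
  have hmono : MonotoneOn f (Set.Icc (0 : ℝ) s) := by
    apply monotoneOn_of_deriv_nonneg (convex_Icc 0 s)
    · have hcont : ∀ x ∈ Set.Icc (0:ℝ) s, (1 : ℝ) - x ≠ 0 := by
        intro x hx
        have := hx.2
        have : x < 1 := lt_of_le_of_lt this hs1
        linarith
      apply ContinuousOn.add
      apply ContinuousOn.add
      apply ContinuousOn.add
      · exact ContinuousOn.log (by fun_prop) hcont
      · exact continuousOn_id
      · exact (continuous_pow 2).continuousOn.div_const 2
      · exact ContinuousOn.div (continuous_pow 3).continuousOn (by fun_prop)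
          (fun x hx => by simpa using hcont x hx)
    · intro x hx
      rw [interior_Icc] at hx
      exact (hd_neg x hx.1 (lt_trans hx.2 hs1)).differentiableAt.differentiableWithinAt
    · intro x hx
      rw [interior_Icc] at hx
      have hx1 : x < 1 := lt_trans hx.2 hs1
      rw [(hd_neg x hx.1 hx1).deriv]
      have h1x : (0:ℝ) < 1 - x := by linarith
      have : -1 / (1 - x) + 1 + x + (3 * x ^ 2 * (3 * (1 - x)) - x ^ 3 * (-3)) / (3 * (1 - x)) ^ 2
          = x ^ 3 / (3 * (1 - x) ^ 2) := by field_simp; ring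
      rw [this]
      exact div_nonneg (pow_nonneg hx.1.le 3) (by positivity)
  have h0 : f 0 ≤ f s := hmono (by simp [hs0]) (by simp [hs0]) hs0
  simp only [hf] at h0
  norm_num at h0
  linarith

private lemma key_ineq (t : ℝ) (ht : -1 < t) :
    t - Real.log (1 + t) ≤ t ^ 2 / 2 + |t| ^ 3 / (3 * (1 + t)) := by
  have h1t : (0:ℝ) < 1 + t := by linarith
  rcases le_or_gt 0 t with h | h
  · have h2 := log_one_add_ge t h
    have : (0:ℝ) ≤ |t| ^ 3 / (3 * (1 + t)) := by positivity
    linarith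
  · set s := -t with hsdef
    have hs0 : 0 < s := by simp [hsdef]; linarith
    have hs1 : s < 1 := by simp [hsdef]; linarith
    have h2 := log_one_sub_ge s hs0.le hs1
    have habs : |t| = s := by rw [abs_of_neg h]
    have h1 : 1 + t = 1 - s := by simp [hsdef]
    rw [habs, h1]
    have : t = -s := by simp [hsdef]
    rw [this]
    linarith

private lemma term_bound (a b δ ε : ℝ) (hδ0 : 0 < δ) (hδa : δ ≤ a) (hδb : δ ≤ b)
    (hab : |b - a| ≤ ε) :
    a * Real.log (a / b) ≤ (a - b) + |b - a| * (ε / (2 * δ) + ε ^ 2 / (3 * δ ^ 2)) := by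
  have ha : 0 < a := lt_of_lt_of_le hδ0 hδa
  have hb : 0 < b := lt_of_lt_of_le hδ0 hδb
  set t : ℝ := (b - a) / a with htdef
  have h1t : 1 + t = b / a := by rw [htdef]; field_simp; ring
  have ht : -1 < t := by
    have h1 : 0 < b / a := by positivity
    rw [← h1t] at h1; linarith
  have hkey := key_ineq t ht
  have hlog : Real.log (a / b) = -Real.log (1 + t) := by
    rw [h1t, ← Real.log_inv]
    congr 1
    field_simp
  have hat : a * t = b - a := by rw [htdef]; field_simp
  have habs : |t| = |b - a| / a := by rw [htdef, abs_div, abs_of_pos ha]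
  have hmul : a * (t - Real.log (1 + t)) ≤ a * (t ^ 2 / 2 + |t| ^ 3 / (3 * (1 + t))) :=
    mul_le_mul_of_nonneg_left hkey ha.le
  have heq1 : a * (t - Real.log (1 + t)) = a * Real.log (a / b) - (a - b) := by
    rw [hlog]; linear_combination hat
  have heq2 : a * (t ^ 2 / 2 + |t| ^ 3 / (3 * (1 + t)))
      = |b - a| ^ 2 / (2 * a) + |b - a| ^ 3 / (3 * a * b) := by
    rw [← sq_abs t, habs, h1t]
    field_simp
  have hb2 : |b - a| ^ 2 / (2 * a) ≤ |b - a| * (ε / (2 * δ)) := by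
    rw [div_le_iff₀ (by positivity)]
    have h2 : 0 ≤ |b - a| := abs_nonneg _
    have hεnn : 0 ≤ ε := le_trans h2 hab
    calc |b - a| ^ 2 = |b - a| * |b - a| := by ring
      _ ≤ |b - a| * ε := mul_le_mul_of_nonneg_left hab h2
      _ = |b - a| * (ε / (2 * δ)) * (2 * δ) := by field_simp
      _ ≤ |b - a| * (ε / (2 * δ)) * (2 * a) := by
          apply mul_le_mul_of_nonneg_left (by linarith)
          positivity
  have hb3 : |b - a| ^ 3 / (3 * a * b) ≤ |b - a| * (ε ^ 2 / (3 * δ ^ 2)) := by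
    rw [div_le_iff₀ (by positivity)]
    have h2 : 0 ≤ |b - a| := abs_nonneg _
    have hεnn : 0 ≤ ε := le_trans h2 hab
    calc |b - a| ^ 3 = |b - a| * (|b - a| * |b - a|) := by ring
      _ ≤ |b - a| * (ε * ε) :=
          mul_le_mul_of_nonneg_left (mul_le_mul hab hab h2 hεnn) h2
      _ = |b - a| * (ε ^ 2 / (3 * δ ^ 2)) * (3 * δ * δ) := by field_simp
      _ ≤ |b - a| * (ε ^ 2 / (3 * δ ^ 2)) * (3 * a * b) := by
          apply mul_le_mul_of_nonneg_left _ (by positivity)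
          nlinarith
  rw [heq1, heq2] at hmul
  nlinarith [hmul, hb2, hb3]

theorem stmt6 {A : Type*} [Fintype A] (P₀ P₁ : A → ℝ) (ε δ : ℝ)
    (hε : 0 < ε) (hεδ : ε < δ)
    (hP₀0 : ∀ m, 0 ≤ P₀ m) (hP₁0 : ∀ m, 0 ≤ P₁ m)
    (hP₀1 : ∑ m, P₀ m = 1) (hP₁1 : ∑ m, P₁ m = 1)
    (hsupp : ∀ m, P₀ m = 0 ↔ P₁ m = 0)
    (hl1 : ∑ m, |P₁ m - P₀ m| ≤ ε)
    (hδ : ∀ m, P₁ m ≠ P₀ m → δ ≤ P₀ m ∧ δ ≤ P₁ m) :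
    ∑ m, P₀ m * Real.logb 2 (P₀ m / P₁ m)
      ≤ (1 / Real.log 2) * (1 / 2 + δ ^ 2 * ε / (3 * (δ - ε) ^ 3)) * ε ^ 2 / δ := by
  have hδ0 : 0 < δ := lt_trans hε hεδ
  have hlog2 : 0 < Real.log 2 := Real.log_pos (by norm_num)
  set S := Finset.univ.filter (fun m => P₁ m ≠ P₀ m) with hS
  -- sum restricts to S
  have hrestrict : ∑ m, P₀ m * Real.logb 2 (P₀ m / P₁ m)
      = ∑ m ∈ S, P₀ m * Real.logb 2 (P₀ m / P₁ m) := by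
    rw [hS]
    rw [Finset.sum_filter_of_ne]
    intro m _ hne heq
    apply hne
    rcases eq_or_ne (P₀ m) 0 with h0 | h0
    · rw [h0, zero_mul]
    · rw [heq, div_self h0, Real.logb_one, mul_zero]
  set C : ℝ := ε / (2 * δ) + ε ^ 2 / (3 * δ ^ 2) with hC
  have hterm : ∀ m ∈ S, P₀ m * Real.log (P₀ m / P₁ m)
      ≤ (P₀ m - P₁ m) + |P₁ m - P₀ m| * C := by
    intro m hm
    rw [hS, Finset.mem_filter] at hm
    obtain ⟨h1, h2⟩ := hδ m hm.2
    have hle : |P₁ m - P₀ m| ≤ ε := by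
      have h3 := Finset.single_le_sum (f := fun k => |P₁ k - P₀ k|)
        (fun k _ => abs_nonneg _) (Finset.mem_univ m)
      linarith
    exact term_bound (P₀ m) (P₁ m) δ ε hδ0 h1 h2 hle
  have hzero : ∑ m ∈ S, (P₀ m - P₁ m) = 0 := by
    rw [hS, Finset.sum_filter_of_ne (by intro m _ hne heq; apply hne; rw [heq]; ring)]
    rw [Finset.sum_sub_distrib, hP₀1, hP₁1]
    ring
  have habs_sum : ∑ m ∈ S, |P₁ m - P₀ m| ≤ ε := by
    have h1 : ∑ m ∈ S, |P₁ m - P₀ m| ≤ ∑ m, |P₁ m - P₀ m| := by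
      apply Finset.sum_le_sum_of_subset_of_nonneg (Finset.filter_subset _ _)
      intro m _ _
      exact abs_nonneg _
    linarith
  have hCpos : 0 ≤ C := by rw [hC]; positivity
  have hsum_log : ∑ m ∈ S, P₀ m * Real.log (P₀ m / P₁ m) ≤ ε * C := by
    calc ∑ m ∈ S, P₀ m * Real.log (P₀ m / P₁ m)
        ≤ ∑ m ∈ S, ((P₀ m - P₁ m) + |P₁ m - P₀ m| * C) := Finset.sum_le_sum hterm
      _ = ∑ m ∈ S, (P₀ m - P₁ m) + (∑ m ∈ S, |P₁ m - P₀ m|) * C := by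
          rw [Finset.sum_add_distrib, Finset.sum_mul]
      _ = (∑ m ∈ S, |P₁ m - P₀ m|) * C := by rw [hzero]; ring
      _ ≤ ε * C := mul_le_mul_of_nonneg_right habs_sum hCpos
  have hlogb : ∑ m ∈ S, P₀ m * Real.logb 2 (P₀ m / P₁ m)
      = (1 / Real.log 2) * ∑ m ∈ S, P₀ m * Real.log (P₀ m / P₁ m) := by
    rw [Finset.mul_sum]
    apply Finset.sum_congr rfl
    intro m _
    rw [Real.logb]
    field_simp
  rw [hrestrict, hlogb]
  have hfinal : ε * C ≤ (1 / 2 + δ ^ 2 * ε / (3 * (δ - ε) ^ 3)) * ε ^ 2 / δ := by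
    have hd : 0 < δ - ε := by linarith
    rw [hC]
    have h1 : ε * (ε / (2 * δ)) = 1 / 2 * ε ^ 2 / δ := by field_simp
    have h2 : ε * (ε ^ 2 / (3 * δ ^ 2)) ≤ δ ^ 2 * ε / (3 * (δ - ε) ^ 3) * ε ^ 2 / δ := by
      have hcube : (δ - ε) ^ 3 ≤ δ ^ 3 := pow_le_pow_left₀ hd.le (by linarith) 3
      rw [show ε * (ε ^ 2 / (3 * δ ^ 2)) = ε ^ 3 / (3 * δ ^ 2) by field_simp,
        show δ ^ 2 * ε / (3 * (δ - ε) ^ 3) * ε ^ 2 / δ = δ * ε ^ 3 / (3 * (δ - ε) ^ 3) by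
          field_simp]
      rw [div_le_div_iff₀ (by positivity) (by positivity)]
      nlinarith [pow_pos hε 3, sq_nonneg δ]
    calc ε * (ε / (2 * δ) + ε ^ 2 / (3 * δ ^ 2))
        = ε * (ε / (2 * δ)) + ε * (ε ^ 2 / (3 * δ ^ 2)) := by ring
      _ ≤ 1 / 2 * ε ^ 2 / δ + δ ^ 2 * ε / (3 * (δ - ε) ^ 3) * ε ^ 2 / δ := by
          rw [h1]; linarith [h2]
      _ = (1 / 2 + δ ^ 2 * ε / (3 * (δ - ε) ^ 3)) * ε ^ 2 / δ := by ring
  calc (1 / Real.log 2) * ∑ m ∈ S, P₀ m * Real.log (P₀ m / P₁ m)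
      ≤ (1 / Real.log 2) * (ε * C) :=
        mul_le_mul_of_nonneg_left hsum_log (by positivity)
    _ ≤ (1 / Real.log 2) * ((1 / 2 + δ ^ 2 * ε / (3 * (δ - ε) ^ 3)) * ε ^ 2 / δ) :=
        mul_le_mul_of_nonneg_left hfinal (by positivity)
    _ = (1 / Real.log 2) * (1 / 2 + δ ^ 2 * ε / (3 * (δ - ε) ^ 3)) * ε ^ 2 / δ := by ring
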